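/- arXiv:2304.09672 — 2 statements merged into one kernel-verified Lean document; each statement's English description precedes it below -/
import Mathlib

section
/- Let s ≥ 1 be an integer, c_1 < … < c_s be s distinct real numbers, and A the coefficient matrix of the associated Runge–Kutta collocation method. Then the characteristic polynomial of A equals τ(π)/s!, where π = ∏_{i=1}^s (X − c_i) and τ is the linear map on polynomials of degree at most s sending Σ_k a_k X^k to Σ_k k! a_k X^k. Equivalently, s! · det(X·I − A) = τ(π)(X). -/
open Polynomial Matrix MeasureTheory

noncomputable section

/-- Lagrange basis function `ℓ_i(t) = ∏_{j≠i} (t - c_j)/(c_i - c_j)`. -/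
def lagrangeFun (s : ℕ) (c : Fin s → ℝ) (i : Fin s) (t : ℝ) : ℝ :=
  ∏ j ∈ Finset.univ.erase i, (t - c j) / (c i - c j)

/-- Coefficient matrix `A` of the collocation method: `a_{ij} = ∫_0^{c_i} ℓ_j`. -/
def collocA (s : ℕ) (c : Fin s → ℝ) : Matrix (Fin s) (Fin s) ℝ :=
  Matrix.of fun i j => ∫ t in (0:ℝ)..(c i), lagrangeFun s c j t

/-- Weight vector `b` of the collocation method: `b_i = ∫_0^1 ℓ_i`. -/
def collocB (s : ℕ) (c : Fin s → ℝ) : Fin s → ℝ :=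
  fun i => ∫ t in (0:ℝ)..(1:ℝ), lagrangeFun s c i t

/-- `π = ∏ (X - c_i)`. -/
def piPoly (s : ℕ) (c : Fin s → ℝ) : Polynomial ℝ :=
  ∏ i : Fin s, (Polynomial.X - Polynomial.C (c i))

/-- The linear map `τ` sending `Σ a_k X^k` to `Σ k! a_k X^k`. -/
def tauP (p : Polynomial ℝ) : Polynomial ℝ :=
  ∑ k ∈ p.support, Polynomial.C ((k.factorial : ℝ) * p.coeff k) * Polynomial.X ^ k

/-- The matrix `A` viewed as a complex matrix. -/
def collocAC (s : ℕ) (c : Fin s → ℝ) : Matrix (Fin s) (Fin s) ℂ :=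
  (collocA s c).map (fun x => (x : ℂ))

/-- The weight vector `b` viewed as a complex vector. -/
def collocBC (s : ℕ) (c : Fin s → ℝ) : Fin s → ℂ :=
  fun i => (collocB s c i : ℂ)

/-- The linear stability function `R(λ) = 1 + λ bᵀ (I - λ A)⁻¹ 𝟙`. -/
def stabR (s : ℕ) (c : Fin s → ℝ) (lam : ℂ) : ℂ :=
  1 + lam * (collocBC s c ⬝ᵥ ((1 - lam • collocAC s c)⁻¹ *ᵥ (fun _ => 1)))

/-- A-stability: `|R(λ)| ≤ 1` on the closed left half-plane (where defined). -/
def AStable (s : ℕ) (c : Fin s → ℝ) : Prop :=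
  ∀ lam : ℂ, lam.re ≤ 0 → IsUnit (1 - lam • collocAC s c).det →
    ‖stabR s c lam‖ ≤ 1

/-- I-stability: `|R(λ)| ≤ 1` on the imaginary axis (where defined). -/
def IStable (s : ℕ) (c : Fin s → ℝ) : Prop :=
  ∀ lam : ℂ, lam.re = 0 → IsUnit (1 - lam • collocAC s c).det →
    ‖stabR s c lam‖ ≤ 1

/-- AS-stability: `I - λA` invertible on `ℂ⁻` and `λ bᵀ (I - λA)⁻¹` uniformly bounded there. -/
def ASStable (s : ℕ) (c : Fin s → ℝ) : Prop :=
  (∀ lam : ℂ, lam.re ≤ 0 → IsUnit (1 - lam • collocAC s c).det) ∧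
  ∃ M : ℝ, ∀ lam : ℂ, lam.re ≤ 0 → ∀ j,
    ‖lam * (collocBC s c ᵥ* (1 - lam • collocAC s c)⁻¹) j‖ ≤ M

/-- ASI-stability: `I - λA` invertible on `ℂ⁻` and `(I - λA)⁻¹` uniformly bounded there. -/
def ASIStable (s : ℕ) (c : Fin s → ℝ) : Prop :=
  (∀ lam : ℂ, lam.re ≤ 0 → IsUnit (1 - lam • collocAC s c).det) ∧
  ∃ M : ℝ, ∀ lam : ℂ, lam.re ≤ 0 → ∀ i j,
    ‖(1 - lam • collocAC s c)⁻¹ i j‖ ≤ M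

/-- IS-stability: `I - λA` invertible on `iℝ` and `λ bᵀ (I - λA)⁻¹` uniformly bounded there. -/
def ISStable (s : ℕ) (c : Fin s → ℝ) : Prop :=
  (∀ lam : ℂ, lam.re = 0 → IsUnit (1 - lam • collocAC s c).det) ∧
  ∃ M : ℝ, ∀ lam : ℂ, lam.re = 0 → ∀ j,
    ‖lam * (collocBC s c ᵥ* (1 - lam • collocAC s c)⁻¹) j‖ ≤ M

/-- ISI-stability: `I - λA` invertible on `iℝ` and `(I - λA)⁻¹` uniformly bounded there. -/
def ISIStable (s : ℕ) (c : Fin s → ℝ) : Prop :=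
  (∀ lam : ℂ, lam.re = 0 → IsUnit (1 - lam • collocAC s c).det) ∧
  ∃ M : ℝ, ∀ lam : ℂ, lam.re = 0 → ∀ i j,
    ‖(1 - lam • collocAC s c)⁻¹ i j‖ ≤ M

end


section Helpers

open Polynomial Matrix Finset

lemma det_companionLike {R : Type*} [CommRing R] :
    ∀ (n : ℕ) (x : R) (e v : ℕ → R),
    (Matrix.of fun i j : Fin (n+1) =>
      if (j:ℕ) = n then v i else if (i:ℕ) = (j:ℕ) then x
      else if (i:ℕ) = (j:ℕ)+1 then e j else 0).det
    = ∑ k ∈ Finset.range (n+1), (-1)^(n-k) * v k * x^k * ∏ j ∈ Finset.Ico k n, e j := by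
  intro n
  induction n with
  | zero => intro x e v; simp [Matrix.det_fin_one]
  | succ n ih =>
    intro x e v
    rw [Matrix.det_succ_row_zero]
    rw [Finset.sum_eq_add_of_mem (0 : Fin (n+2)) (Fin.last (n+1))
      (Finset.mem_univ _) (Finset.mem_univ _)
      (by simp [Fin.ext_iff])
      (by
        intro j _ hj
        obtain ⟨hj0, hjl⟩ := hj
        have h1 : (j:ℕ) ≠ n+1 := fun h => hjl (Fin.ext h)
        have h2 : (0:ℕ) ≠ (j:ℕ) := fun h => hj0 (Fin.ext h.symm)
        simp [Matrix.of_apply, h1, h2])]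
    have hsub0 : ((Matrix.of fun i j : Fin (n+2) =>
        if (j:ℕ) = n+1 then v i else if (i:ℕ) = (j:ℕ) then x
        else if (i:ℕ) = (j:ℕ)+1 then e j else 0).submatrix Fin.succ
          (Fin.succAbove 0)) =
        (Matrix.of fun i j : Fin (n+1) =>
          if (j:ℕ) = n then v ((i:ℕ)+1) else if (i:ℕ) = (j:ℕ) then x
          else if (i:ℕ) = (j:ℕ)+1 then e ((j:ℕ)+1) else 0) := by
      ext i j
      simp only [Matrix.submatrix_apply, Matrix.of_apply, Fin.succAbove_zero,
        Fin.val_succ]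
      by_cases h1 : (j:ℕ) = n
      · simp [h1]
      · rw [if_neg h1, if_neg (by omega : ¬((j:ℕ)+1 = n+1))]
        by_cases h2 : (i:ℕ) = (j:ℕ)
        · simp [h2]
        · rw [if_neg h2, if_neg (by omega : ¬((i:ℕ)+1 = (j:ℕ)+1))]
          by_cases h3 : (i:ℕ) = (j:ℕ)+1
          · simp [h3]
          · rw [if_neg h3, if_neg (by omega : ¬((i:ℕ)+1 = (j:ℕ)+1+1))]
    have hsubl : ((Matrix.of fun i j : Fin (n+2) =>
        if (j:ℕ) = n+1 then v i else if (i:ℕ) = (j:ℕ) then x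
        else if (i:ℕ) = (j:ℕ)+1 then e j else 0).submatrix Fin.succ
          (Fin.succAbove (Fin.last (n+1)))).det = ∏ j : Fin (n+1), e (j:ℕ) := by
      rw [Matrix.det_of_upperTriangular]
      · apply Finset.prod_congr rfl
        intro j _
        have hj := j.isLt
        simp only [Matrix.submatrix_apply, Matrix.of_apply, Fin.succAbove_last,
          Fin.coe_castSucc, Fin.val_succ]
        simp
        intro h
        exact absurd h (by omega)
      · intro i j hji
        simp only [Matrix.submatrix_apply, Matrix.of_apply, Fin.succAbove_last,
          Fin.coe_castSucc, Fin.val_succ]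
        have hji' : (j:ℕ) < (i:ℕ) := hji
        rw [if_neg (by omega), if_neg (by omega), if_neg (by omega)]
    rw [hsub0, hsubl]
    have ih' := ih x (fun m => e (m+1)) (fun m => v (m+1))
    rw [ih']
    have hA00 : (Matrix.of fun i j : Fin (n+2) =>
        if (j:ℕ) = n+1 then v i else if (i:ℕ) = (j:ℕ) then x
        else if (i:ℕ) = (j:ℕ)+1 then e j else 0) 0 0 = x := by simp
    have hA0l : (Matrix.of fun i j : Fin (n+2) =>
        if (j:ℕ) = n+1 then v i else if (i:ℕ) = (j:ℕ) then x
        else if (i:ℕ) = (j:ℕ)+1 then e j else 0) 0 (Fin.last (n+1)) = v 0 := by simp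
    rw [hA00, hA0l]
    rw [Finset.sum_range_succ'
      (fun k => (-1:R)^(n+1-k) * v k * x^k * ∏ j ∈ Finset.Ico k (n+1), e j) (n+1)]
    congr 1
    · rw [Finset.mul_sum]
      simp only [Fin.val_zero, pow_zero, one_mul]
      apply Finset.sum_congr rfl
      intro k hk
      have hprod : (∏ j ∈ Finset.Ico k n, e (j+1)) = ∏ j ∈ Finset.Ico (k+1) (n+1), e j := by
        rw [Finset.prod_Ico_eq_prod_range, Finset.prod_Ico_eq_prod_range]
        have h : n + 1 - (k + 1) = n - k := by omega
        rw [h]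
        apply Finset.prod_congr rfl
        intro i _
        congr 1
        omega
      rw [hprod]
      have h : n + 1 - (k + 1) = n - k := by omega
      rw [h]
      ring
    · simp only [Fin.val_last, pow_zero, mul_one, Nat.sub_zero, ← Finset.range_eq_Ico,
        Fin.prod_univ_eq_prod_range]

lemma charpoly_conj_units {m : Type*} [Fintype m] [DecidableEq m] {R : Type*} [CommRing R]
    (P A : Matrix m m R) (hP : IsUnit P.det) :
    (P * A * P⁻¹).charpoly = A.charpoly := by
  have hPP : P.map (C : R → R[X]) * (P⁻¹).map (C : R → R[X]) = 1 := by
    rw [← Matrix.map_mul (f := (C : R →+* R[X])), Matrix.mul_nonsing_inv _ hP]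
    exact Matrix.map_one _ (map_zero C) (map_one C)
  have h1 : charmatrix (P * A * P⁻¹)
      = P.map (C : R → R[X]) * charmatrix A * (P⁻¹).map (C : R → R[X]) := by
    unfold charmatrix
    simp only [RingHom.mapMatrix_apply]
    rw [Matrix.map_mul (f := (C : R →+* R[X])), Matrix.map_mul (f := (C : R →+* R[X]))]
    rw [Matrix.mul_sub, Matrix.sub_mul]
    congr 1
    · have hcomm : P.map (C : R → R[X]) * Matrix.scalar m (X : R[X])
          = Matrix.scalar m (X : R[X]) * P.map (C : R → R[X]) :=
        (scalar_commute (X : R[X]) (fun r' => Commute.all _ r') (P.map (C : R → R[X]))).symm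
      rw [hcomm, Matrix.mul_assoc, hPP, Matrix.mul_one]
  rw [Matrix.charpoly, Matrix.charpoly, h1, Matrix.det_mul, Matrix.det_mul]
  have : (P.map (C : R → R[X])).det * ((P⁻¹).map (C : R → R[X])).det = 1 := by
    rw [← Matrix.det_mul, hPP, Matrix.det_one]
  calc (P.map (C : R → R[X])).det * (charmatrix A).det * ((P⁻¹).map (C : R → R[X])).det
      = (P.map (C : R → R[X])).det * ((P⁻¹).map (C : R → R[X])).det * (charmatrix A).det := by
        ring
    _ = (charmatrix A).det := by rw [this, one_mul]

lemma lagrangeFun_eq (s : ℕ) (c : Fin s → ℝ) (j : Fin s) (t : ℝ) :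
    lagrangeFun s c j t = Polynomial.eval t (Lagrange.basis Finset.univ c j) := by
  unfold lagrangeFun
  rw [Lagrange.basis, Polynomial.eval_prod]
  apply Finset.prod_congr rfl
  intro k _
  simp [Lagrange.basisDivisor, div_eq_mul_inv, mul_comm]

lemma lagrangeFun_continuous (s : ℕ) (c : Fin s → ℝ) (j : Fin s) :
    Continuous (lagrangeFun s c j) := by
  have : lagrangeFun s c j = fun t => Polynomial.eval t (Lagrange.basis Finset.univ c j) :=
    funext (lagrangeFun_eq s c j)
  rw [this]
  exact Polynomial.continuous _

lemma sum_pow_lagrange (s : ℕ) (c : Fin s → ℝ) (hc : Function.Injective c) (k : ℕ)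
    (hk : k < s) (t : ℝ) :
    ∑ j : Fin s, c j ^ k * lagrangeFun s c j t = t ^ k := by
  have hinj : Set.InjOn c (Finset.univ : Finset (Fin s)) := fun a _ b _ h => hc h
  have hdeg : (Polynomial.X ^ k : Polynomial ℝ).degree
      < ((Finset.univ : Finset (Fin s)).card : ℕ) := by
    rw [Polynomial.degree_X_pow, Finset.card_univ, Fintype.card_fin]
    exact_mod_cast hk
  have h := Lagrange.eq_interpolate (v := c) hinj hdeg
  have h2 := congrArg (Polynomial.eval t) h
  rw [Lagrange.interpolate_apply, Polynomial.eval_pow, Polynomial.eval_X,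
    Polynomial.eval_finset_sum] at h2
  rw [h2]
  apply Finset.sum_congr rfl
  intro j _
  rw [Polynomial.eval_mul, Polynomial.eval_C, Polynomial.eval_pow, Polynomial.eval_X,
    lagrangeFun_eq]

lemma collocA_sum_pow (s : ℕ) (c : Fin s → ℝ) (hc : Function.Injective c) (k : ℕ)
    (hk : k < s) (i : Fin s) :
    ∑ j : Fin s, collocA s c i j * c j ^ k = c i ^ (k+1) / (k+1) := by
  have h1 : ∑ j : Fin s, collocA s c i j * c j ^ k
      = ∫ t in (0:ℝ)..(c i), ∑ j : Fin s, c j ^ k * lagrangeFun s c j t := by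
    rw [intervalIntegral.integral_finset_sum (f := fun j t => c j ^ k * lagrangeFun s c j t)
      (fun j _ => (continuous_const.mul (lagrangeFun_continuous s c j)).intervalIntegrable _ _)]
    apply Finset.sum_congr rfl
    intro j _
    rw [mul_comm]
    show (c j ^ k) * ∫ t in (0:ℝ)..(c i), lagrangeFun s c j t = _
    rw [← intervalIntegral.integral_const_mul]
  rw [h1]
  have h2 : ∀ t : ℝ, ∑ j : Fin s, c j ^ k * lagrangeFun s c j t = t ^ k :=
    sum_pow_lagrange s c hc k hk
  rw [intervalIntegral.integral_congr (g := fun t => t ^ k) (fun t _ => h2 t)]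
  rw [integral_pow]
  simp

lemma piPoly_monic (s : ℕ) (c : Fin s → ℝ) : (piPoly s c).Monic :=
  monic_prod_of_monic _ _ fun i _ => monic_X_sub_C _

lemma piPoly_natDegree (s : ℕ) (c : Fin s → ℝ) : (piPoly s c).natDegree = s := by
  rw [piPoly, natDegree_prod]
  · simp
  · intro i _
    exact X_sub_C_ne_zero _

lemma piPoly_eval (s : ℕ) (c : Fin s → ℝ) (i : Fin s) : (piPoly s c).eval (c i) = 0 := by
  rw [piPoly, eval_prod]
  exact Finset.prod_eq_zero (Finset.mem_univ i) (by simp)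

end Helpers

/-- `s! · χ_A = τ(π)`, i.e. the characteristic polynomial of `A` is `τ(π)/s!`. -/
theorem charpoly_collocA (s : ℕ) (hs : 1 ≤ s) (c : Fin s → ℝ) (hc : StrictMono c) :
    Polynomial.C (s.factorial : ℝ) * (collocA s c).charpoly = tauP (piPoly s c) := by
  obtain ⟨n, rfl⟩ : ∃ n, s = n + 1 := ⟨s - 1, by omega⟩
  have hcinj : Function.Injective c := hc.injective
  set b : ℕ → ℝ := fun m => (piPoly (n+1) c).coeff m with hb
  set M : Matrix (Fin (n+1)) (Fin (n+1)) ℝ := Matrix.of (fun m k : Fin (n+1) =>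
    if (k:ℕ) = n then -(b (m:ℕ)) / ((n:ℝ)+1)
    else if (m:ℕ) = (k:ℕ)+1 then 1/(((k:ℕ):ℝ)+1) else 0) with hM
  have hVdet : IsUnit (Matrix.vandermonde c).det :=
    isUnit_iff_ne_zero.mpr (Matrix.det_vandermonde_ne_zero_iff.mpr hcinj)
  have hbn : b (n+1) = 1 := by
    have h2 := (piPoly_monic (n+1) c).coeff_natDegree
    rwa [piPoly_natDegree] at h2
  -- the key similarity relation
  have hAV : collocA (n+1) c * Matrix.vandermonde c = Matrix.vandermonde c * M := by
    ext i k
    rw [Matrix.mul_apply, Matrix.mul_apply]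
    have hk := k.isLt
    have hLHS : ∑ j, collocA (n+1) c i j * Matrix.vandermonde c j k
        = c i ^ ((k:ℕ)+1) / (((k:ℕ):ℝ)+1) := by
      simp only [Matrix.vandermonde_apply]
      exact collocA_sum_pow (n+1) c hcinj (k:ℕ) hk i
    rw [hLHS]
    by_cases hkn : (k:ℕ) = n
    · rw [hkn]
      have heval := piPoly_eval (n+1) c i
      rw [Polynomial.eval_eq_sum_range' (n := n+2)
        (by rw [piPoly_natDegree]; omega) (c i)] at heval
      rw [Finset.sum_range_succ] at heval
      have hsum : ∑ m ∈ Finset.range (n+1), b m * c i ^ m = -(c i ^ (n+1)) := by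
        have hbe : (piPoly (n+1) c).coeff = b := rfl
        rw [hbe, hbn] at heval
        linarith [heval]
      have hRHS : ∑ m, Matrix.vandermonde c i m * M m k
          = c i ^ (n+1) / ((n:ℝ)+1) := by
        have hterm : ∀ m : Fin (n+1), Matrix.vandermonde c i m * M m k
            = (-(1:ℝ)/((n:ℝ)+1)) * (b (m:ℕ) * c i ^ (m:ℕ)) := by
          intro m
          rw [Matrix.vandermonde_apply, hM, Matrix.of_apply, if_pos hkn]
          ring
        rw [Finset.sum_congr rfl (fun m _ => hterm m), ← Finset.mul_sum]
        rw [Fin.sum_univ_eq_sum_range (fun m => b m * c i ^ m) (n+1), hsum]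
        field_simp
      rw [hRHS]
    · have hkln : (k:ℕ) < n := by omega
      have hRHS : ∑ m, Matrix.vandermonde c i m * M m k
          = c i ^ ((k:ℕ)+1) * (1/(((k:ℕ):ℝ)+1)) := by
        rw [Finset.sum_eq_single (⟨(k:ℕ)+1, by omega⟩ : Fin (n+1))]
        · rw [Matrix.vandermonde_apply, hM, Matrix.of_apply, if_neg hkn, if_pos rfl]
        · intro m _ hm
          rw [Matrix.vandermonde_apply, hM, Matrix.of_apply, if_neg hkn,
            if_neg (fun h => hm (Fin.ext (by simpa using h))), mul_zero]
        · intro h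
          exact absurd (Finset.mem_univ _) h
      rw [hRHS]
      ring
  have hA : collocA (n+1) c
      = Matrix.vandermonde c * M * (Matrix.vandermonde c)⁻¹ := by
    calc collocA (n+1) c
        = collocA (n+1) c * (Matrix.vandermonde c * (Matrix.vandermonde c)⁻¹) := by
          rw [Matrix.mul_nonsing_inv _ hVdet, Matrix.mul_one]
      _ = collocA (n+1) c * Matrix.vandermonde c * (Matrix.vandermonde c)⁻¹ := by
          rw [Matrix.mul_assoc]
      _ = Matrix.vandermonde c * M * (Matrix.vandermonde c)⁻¹ := by rw [hAV]
  rw [hA, charpoly_conj_units _ _ hVdet]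
  -- charmatrix of M has companion-like shape
  have hcm : charmatrix M = Matrix.of (fun i j : Fin (n+1) =>
      if (j:ℕ) = n then ((if (i:ℕ) = n then (X:Polynomial ℝ) else 0)
        + C (b (i:ℕ) / ((n:ℝ)+1)))
      else if (i:ℕ) = (j:ℕ) then (X:Polynomial ℝ)
      else if (i:ℕ) = (j:ℕ)+1 then -C (1/(((j:ℕ):ℝ)+1)) else 0) := by
    ext i j
    by_cases hij : i = j
    · subst hij
      rw [charmatrix_apply_eq, Matrix.of_apply, hM, Matrix.of_apply]
      by_cases hin : (i:ℕ) = n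
      · rw [if_pos hin, if_pos hin, if_pos hin, neg_div, map_neg]
        ring
      · rw [if_neg hin, if_neg hin, if_neg (by omega : ¬((i:ℕ) = (i:ℕ)+1)),
          if_pos rfl, map_zero, sub_zero]
    · rw [charmatrix_apply_ne _ _ _ hij, Matrix.of_apply, hM, Matrix.of_apply]
      by_cases hjn : (j:ℕ) = n
      · rw [if_pos hjn, if_pos hjn]
        have hin : (i:ℕ) ≠ n := by
          intro h
          exact hij (Fin.ext (by omega))
        rw [if_neg hin, neg_div, map_neg, neg_neg, zero_add]
      · rw [if_neg hjn, if_neg hjn]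
        have hij' : (i:ℕ) ≠ (j:ℕ) := fun h => hij (Fin.ext h)
        rw [if_neg hij']
        by_cases h3 : (i:ℕ) = (j:ℕ)+1
        · rw [if_pos h3, if_pos h3]
        · rw [if_neg h3, if_neg h3, map_zero, neg_zero]
  have hdet := det_companionLike n (X : Polynomial ℝ)
    (fun m => -C (1/((m:ℝ)+1)))
    (fun m => (if m = n then (X:Polynomial ℝ) else 0) + C (b m / ((n:ℝ)+1)))
  rw [Matrix.charpoly, hcm, hdet]
  -- now pure polynomial algebra
  have hterm : ∀ k ∈ Finset.range (n+1),
      C (((n+1).factorial : ℝ)) * ((-1)^(n-k)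
        * ((if k = n then (X:Polynomial ℝ) else 0) + C (b k / ((n:ℝ)+1))) * X^k
        * ∏ j ∈ Finset.Ico k n, -C (1/((j:ℝ)+1)))
      = (if k = n then (X:Polynomial ℝ) else 0) * C (((n:ℝ)+1) * k.factorial) * X^k
        + C ((k.factorial : ℝ) * b k) * X^k := by
    intro k hk
    have hkn : k ≤ n := by
      have := Finset.mem_range.mp hk
      omega
    have hre : (∏ j ∈ Finset.Ico k n, (j+1)) = ∏ j ∈ Finset.Ico (k+1) (n+1), j := by
      rw [Finset.prod_Ico_eq_prod_range, Finset.prod_Ico_eq_prod_range]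
      have h : n + 1 - (k+1) = n - k := by omega
      rw [h]
      apply Finset.prod_congr rfl
      intro i _
      omega
    have hPn : (k.factorial * ∏ j ∈ Finset.Ico k n, (j+1)) = n.factorial := by
      rw [hre, ← Finset.prod_Ico_id_eq_factorial k, ← Finset.prod_Ico_id_eq_factorial n]
      exact Finset.prod_Ico_consecutive _ (by omega) (by omega)
    have hPn' : (k.factorial : ℝ) * ∏ j ∈ Finset.Ico k n, ((j:ℝ)+1) = (n.factorial : ℝ) := by
      have := congrArg (fun x : ℕ => (x:ℝ)) hPn
      push_cast at this
      exact this
    have hposP : (0:ℝ) < ∏ j ∈ Finset.Ico k n, ((j:ℝ)+1) :=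
      Finset.prod_pos fun j _ => by positivity
    have hq : ((n+1).factorial : ℝ) * ∏ j ∈ Finset.Ico k n, (1/((j:ℝ)+1))
        = ((n:ℝ)+1) * (k.factorial : ℝ) := by
      simp only [one_div, Finset.prod_inv_distrib]
      rw [mul_inv_eq_iff_eq_mul₀ (ne_of_gt hposP)]
      rw [Nat.factorial_succ]
      push_cast
      rw [← hPn']
      ring
    have hprodneg : (∏ j ∈ Finset.Ico k n, -C (1/((j:ℝ)+1)))
        = (-1)^(n-k) * C (∏ j ∈ Finset.Ico k n, (1/((j:ℝ)+1))) := by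
      rw [map_prod]
      rw [show (∏ j ∈ Finset.Ico k n, -C (1/((j:ℝ)+1)))
          = ∏ j ∈ Finset.Ico k n, ((-1) * C (1/((j:ℝ)+1))) by
        apply Finset.prod_congr rfl; intro j _; ring]
      rw [Finset.prod_mul_distrib, Finset.prod_const, Nat.card_Ico]
    rw [hprodneg]
    have hsq : ((-1:Polynomial ℝ))^(n-k) * ((-1:Polynomial ℝ))^(n-k) = 1 := by
      rw [← pow_add]
      exact Even.neg_one_pow ⟨n-k, rfl⟩
    calc C (((n+1).factorial : ℝ)) * ((-1)^(n-k)
          * ((if k = n then (X:Polynomial ℝ) else 0) + C (b k / ((n:ℝ)+1))) * X^k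
          * ((-1)^(n-k) * C (∏ j ∈ Finset.Ico k n, (1/((j:ℝ)+1)))))
        = ((-1:Polynomial ℝ))^(n-k) * ((-1:Polynomial ℝ))^(n-k)
          * (C (((n+1).factorial : ℝ)) * C (∏ j ∈ Finset.Ico k n, (1/((j:ℝ)+1))))
          * ((if k = n then (X:Polynomial ℝ) else 0) + C (b k / ((n:ℝ)+1))) * X^k := by
          ring
      _ = C (((n:ℝ)+1) * (k.factorial : ℝ))
          * ((if k = n then (X:Polynomial ℝ) else 0) + C (b k / ((n:ℝ)+1))) * X^k := by
          rw [hsq, ← _root_.map_mul, hq, one_mul]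
      _ = (if k = n then (X:Polynomial ℝ) else 0) * C (((n:ℝ)+1) * k.factorial) * X^k
          + C ((k.factorial : ℝ) * b k) * X^k := by
          rw [mul_add, add_mul]
          congr 1
          · ring
          · rw [← _root_.map_mul]
            congr 2
            field_simp
  rw [Finset.mul_sum, Finset.sum_congr rfl hterm, Finset.sum_add_distrib]
  have h1 : ∑ k ∈ Finset.range (n+1),
      (if k = n then (X:Polynomial ℝ) else 0) * C (((n:ℝ)+1) * k.factorial) * X^k
      = C (((n+1).factorial : ℝ)) * X^(n+1) := by
    rw [Finset.sum_eq_single n]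
    · rw [if_pos rfl, Nat.factorial_succ]
      push_cast
      ring
    · intro k _ hkn
      rw [if_neg hkn, zero_mul, zero_mul]
    · intro h
      exact absurd (Finset.self_mem_range_succ n) h
  rw [h1]
  have htau : tauP (piPoly (n+1) c)
      = ∑ k ∈ Finset.range ((n+1)+1), C ((k.factorial : ℝ) * b k) * X^k := by
    rw [tauP]
    apply Finset.sum_subset
    · exact Polynomial.supp_subset_range (by rw [piPoly_natDegree]; omega)
    · intro k _ hk
      rw [Polynomial.notMem_support_iff.mp hk]
      simp
  rw [htau, Finset.sum_range_succ (fun k => C ((k.factorial : ℝ) * b k) * X^k) (n+1), hbn, mul_one]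
  ring
end

section
/- Let s ≥ 1 be an integer, c_1 < … < c_s be s distinct real numbers, and (A, b) the coefficients of the associated Runge–Kutta collocation method with linear stability function R(λ) = 1 + λ bᵀ (I − λA)^{-1} 𝟙. Then for every λ ∈ ℂ \ {0} such that 1/λ is not a root of τ(π) (so that I − λA is invertible), one has R(λ) = τ(π(X+1))(1/λ) / τ(π(X))(1/λ), where π(X+1) denotes the polynomial π composed with X+1. -/
open Polynomial Matrix MeasureTheory

namespace StabProof
open Polynomial

lemma lagrangeFun_eq_eval {s : ℕ} (c : Fin s → ℝ) (i : Fin s) (t : ℝ) :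
    lagrangeFun s c i t = Polynomial.eval t (Lagrange.basis Finset.univ c i) := by
  unfold lagrangeFun Lagrange.basis Lagrange.basisDivisor
  rw [eval_prod]
  refine Finset.prod_congr rfl fun j _ => ?_
  simp [div_eq_mul_inv, mul_comm]

lemma integral_eval {s : ℕ} {c : Fin s → ℝ} (hc : StrictMono c)
    {q : ℝ[X]} (hq : q.natDegree < s) (x : ℝ) :
    ∫ t in (0:ℝ)..x, Polynomial.eval t q
      = ∑ j, (∫ t in (0:ℝ)..x, lagrangeFun s c j t) * Polynomial.eval (c j) q := by
  have hinj : Set.InjOn c (Finset.univ : Finset (Fin s)) := fun a _ b _ h => hc.injective h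
  have hqdeg : q.degree < ((Finset.univ : Finset (Fin s)).card : WithBot ℕ) := by
    refine lt_of_le_of_lt q.degree_le_natDegree ?_
    simpa using (Nat.cast_lt (α := WithBot ℕ)).mpr hq
  have hrep := Lagrange.eq_interpolate hinj hqdeg
  conv_lhs => rw [hrep]
  simp_rw [Lagrange.interpolate_apply, eval_finset_sum, eval_mul, eval_C, lagrangeFun_eq_eval]
  rw [intervalIntegral.integral_finset_sum]
  · exact Finset.sum_congr rfl fun j _ => by
      rw [intervalIntegral.integral_const_mul, mul_comm]
  · intro j _
    exact (continuous_const.mul (Polynomial.continuous _)).intervalIntegrable _ _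

lemma eval_sub_eval {s : ℕ} {c : Fin s → ℝ} (hc : StrictMono c) (hs : 1 ≤ s)
    {q : ℝ[X]} (hq : q.natDegree ≤ s) (x : ℝ) :
    Polynomial.eval x q - Polynomial.eval 0 q
      = ∑ j, (∫ t in (0:ℝ)..x, lagrangeFun s c j t) * Polynomial.eval (c j) (derivative q) := by
  have hd : (derivative q).natDegree < s := by
    have := natDegree_derivative_le q
    omega
  rw [← integral_eval hc hd x]
  rw [intervalIntegral.integral_eq_sub_of_hasDerivAt (f := fun t => Polynomial.eval t q)
    (fun t _ => q.hasDerivAt t) ((Polynomial.continuous _).intervalIntegrable _ _)]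

noncomputable def piC (s : ℕ) (c : Fin s → ℝ) : ℂ[X] :=
  (piPoly s c).map (algebraMap ℝ ℂ)

lemma monic_piPoly (s : ℕ) (c : Fin s → ℝ) : (piPoly s c).Monic :=
  monic_prod_of_monic _ _ fun i _ => monic_X_sub_C (c i)

lemma natDegree_piPoly (s : ℕ) (c : Fin s → ℝ) : (piPoly s c).natDegree = s := by
  unfold piPoly
  rw [natDegree_prod_of_monic _ _ fun i _ => monic_X_sub_C (c i)]
  simp

lemma monic_piC (s : ℕ) (c : Fin s → ℝ) : (piC s c).Monic :=
  (monic_piPoly s c).map _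

lemma natDegree_piC (s : ℕ) (c : Fin s → ℝ) : (piC s c).natDegree = s := by
  rw [piC, (monic_piPoly s c).natDegree_map, natDegree_piPoly]

lemma eval_piC (s : ℕ) (c : Fin s → ℝ) (j : Fin s) :
    Polynomial.eval ((c j : ℝ) : ℂ) (piC s c) = 0 := by
  rw [piC, eval_map, ← aeval_def]
  unfold piPoly
  rw [map_prod]
  exact Finset.prod_eq_zero (Finset.mem_univ j) (by simp)

lemma coeff_zero_iterate_derivative {R : Type*} [CommRing R] (p : R[X]) (k : ℕ) :
    (Polynomial.derivative^[k] p).coeff 0 = (k.factorial : R) * p.coeff k := by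
  rw [Polynomial.coeff_iterate_derivative]
  simp [Nat.descFactorial_self, nsmul_eq_mul]

lemma tau_eval {p : ℝ[X]} {n : ℕ} (hn : p.natDegree < n) (μ : ℂ) :
    Polynomial.aeval μ (tauP p)
      = ∑ k ∈ Finset.range n, (k.factorial : ℂ) * (p.coeff k : ℂ) * μ^k := by
  unfold tauP
  rw [map_sum]
  rw [Finset.sum_subset (Polynomial.supp_subset_range hn)]
  · exact Finset.sum_congr rfl fun k _ => by
      simp [Complex.ofReal_mul]
  · intro k _ hk
    have : p.coeff k = 0 := Polynomial.notMem_support_iff.mp hk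
    simp [this]

lemma eval_sub_evalC {s : ℕ} {c : Fin s → ℝ} (hc : StrictMono c) (hs : 1 ≤ s)
    {q : ℂ[X]} (hq : q.natDegree ≤ s) (x : ℝ) :
    Polynomial.eval (x : ℂ) q - Polynomial.eval 0 q
      = ∑ j, ((∫ t in (0:ℝ)..x, lagrangeFun s c j t : ℝ) : ℂ)
          * Polynomial.eval ((c j : ℝ) : ℂ) (derivative q) := by
  have key : ∀ k ∈ Finset.range (s+1), ((x:ℂ)^k - 0^k)
      = ∑ j, ((∫ t in (0:ℝ)..x, lagrangeFun s c j t : ℝ) : ℂ)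
          * ((k:ℂ) * ((c j : ℝ) : ℂ)^(k-1)) := by
    intro k hk
    have hk' : (X ^ k : ℝ[X]).natDegree ≤ s := by
      simpa using Nat.lt_succ_iff.mp (Finset.mem_range.mp hk)
    have h := eval_sub_eval hc hs hk' x
    simp only [eval_pow, eval_X, derivative_X_pow, eval_mul, eval_C] at h
    have h2 := congrArg (fun r : ℝ => (r : ℂ)) h
    push_cast at h2
    simpa using h2
  have hqlt : q.natDegree < s + 1 := Nat.lt_succ_of_le hq
  calc Polynomial.eval (x:ℂ) q - Polynomial.eval 0 q
      = ∑ k ∈ Finset.range (s+1), q.coeff k * ((x:ℂ)^k - 0^k) := by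
        conv_lhs => rw [q.as_sum_range' (s+1) hqlt]
        simp [eval_finset_sum, eval_monomial, mul_sub, Finset.sum_sub_distrib]
    _ = ∑ k ∈ Finset.range (s+1), q.coeff k *
          ∑ j, ((∫ t in (0:ℝ)..x, lagrangeFun s c j t : ℝ) : ℂ)
            * ((k:ℂ) * ((c j : ℝ) : ℂ)^(k-1)) :=
        Finset.sum_congr rfl fun k hk => by rw [key k hk]
    _ = ∑ j, ((∫ t in (0:ℝ)..x, lagrangeFun s c j t : ℝ) : ℂ)
          * Polynomial.eval ((c j : ℝ) : ℂ) (derivative q) := by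
        conv_rhs => rw [q.as_sum_range' (s+1) hqlt]
        simp only [derivative_sum, derivative_monomial, eval_finset_sum, eval_monomial]
        simp_rw [Finset.mul_sum]
        rw [Finset.sum_comm]
        refine Finset.sum_congr rfl fun k _ => Finset.sum_congr rfl fun j _ => ?_
        ring

noncomputable def wPoly (s : ℕ) (c : Fin s → ℝ) (μ : ℂ) : ℂ[X] :=
  ∑ k ∈ Finset.range (s+1), μ^(k+1) • (Polynomial.derivative^[k] (piC s c))

lemma natDegree_wPoly (s : ℕ) (c : Fin s → ℝ) (μ : ℂ) : (wPoly s c μ).natDegree ≤ s := by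
  refine Polynomial.natDegree_sum_le_of_forall_le _ _ fun k _ => ?_
  refine le_trans (natDegree_smul_le _ _) (le_trans (natDegree_iterate_derivative _ _) ?_)
  rw [natDegree_piC]
  omega

lemma derivative_wPoly (s : ℕ) (c : Fin s → ℝ) {lam μ : ℂ} (hμ : lam * μ = 1) :
    Polynomial.derivative (wPoly s c μ) = lam • wPoly s c μ - piC s c := by
  have htel : lam • wPoly s c μ - Polynomial.derivative (wPoly s c μ) = piC s c := by
    unfold wPoly
    rw [Finset.smul_sum, derivative_sum, ← Finset.sum_sub_distrib]
    have : ∀ k ∈ Finset.range (s+1),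
        lam • μ^(k+1) • (Polynomial.derivative^[k] (piC s c))
          - Polynomial.derivative (μ^(k+1) • (Polynomial.derivative^[k] (piC s c)))
        = μ^k • (Polynomial.derivative^[k] (piC s c))
          - μ^(k+1) • (Polynomial.derivative^[k+1] (piC s c)) := by
      intro k _
      rw [derivative_smul, smul_smul]
      have : lam * μ^(k+1) = μ^k := by
        rw [pow_succ, ← mul_assoc, mul_comm lam (μ^k), mul_assoc, hμ, mul_one]
      rw [this, Function.iterate_succ_apply']
    rw [Finset.sum_congr rfl this]
    rw [Finset.sum_range_sub' (fun k => μ^k • (Polynomial.derivative^[k] (piC s c)))]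
    have hz : Polynomial.derivative^[s+1] (piC s c) = 0 :=
      Polynomial.iterate_derivative_eq_zero (by rw [natDegree_piC]; omega)
    simp [hz]
  linear_combination -htel

lemma eval_zero_wPoly (s : ℕ) (c : Fin s → ℝ) (μ : ℂ) :
    Polynomial.eval 0 (wPoly s c μ) = μ * Polynomial.aeval μ (tauP (piPoly s c)) := by
  rw [tau_eval (n := s+1) (by rw [natDegree_piPoly]; omega)]
  unfold wPoly
  rw [eval_finset_sum, Finset.mul_sum]
  refine Finset.sum_congr rfl fun k _ => ?_
  rw [eval_smul, smul_eq_mul, ← coeff_zero_eq_eval_zero, coeff_zero_iterate_derivative]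
  rw [piC, Polynomial.coeff_map, Complex.coe_algebraMap]
  ring

lemma iterate_derivative_comp_X_add_one {R : Type*} [CommRing R] (p : R[X]) (k : ℕ) :
    (Polynomial.derivative^[k] p).comp (X + 1)
      = Polynomial.derivative^[k] (p.comp (X + 1)) := by
  induction k with
  | zero => rfl
  | succ k ih =>
    rw [Function.iterate_succ_apply', Function.iterate_succ_apply', ← ih]
    rw [Polynomial.derivative_comp]
    simp

lemma eval_one_wPoly (s : ℕ) (c : Fin s → ℝ) (μ : ℂ) :
    Polynomial.eval 1 (wPoly s c μ)
      = μ * Polynomial.aeval μ (tauP ((piPoly s c).comp (X + 1))) := by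
  have hdeg : ((piPoly s c).comp (X + 1)).natDegree < s + 1 := by
    rw [natDegree_comp, natDegree_piPoly]
    have : (X + 1 : ℝ[X]).natDegree = 1 := by
      simpa using Polynomial.natDegree_X_add_C (1 : ℝ)
    rw [this, mul_one]
    omega
  rw [tau_eval hdeg]
  unfold wPoly
  rw [eval_finset_sum, Finset.mul_sum]
  refine Finset.sum_congr rfl fun k _ => ?_
  rw [eval_smul, smul_eq_mul]
  have h1 : Polynomial.eval 1 (Polynomial.derivative^[k] (piC s c))
      = (k.factorial : ℂ) * ((piPoly s c).comp (X + 1)).coeff k := by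
    have h2 : Polynomial.eval 1 (Polynomial.derivative^[k] (piC s c))
        = Polynomial.eval 0 ((Polynomial.derivative^[k] (piC s c)).comp (X + 1)) := by
      rw [Polynomial.eval_comp]
      simp
    rw [h2, iterate_derivative_comp_X_add_one, ← coeff_zero_eq_eval_zero,
      coeff_zero_iterate_derivative]
    have h3 : (piC s c).comp (X + 1) = ((piPoly s c).comp (X + 1)).map (algebraMap ℝ ℂ) := by
      rw [piC, Polynomial.map_comp]
      simp
    rw [h3, Polynomial.coeff_map]
    rfl
  rw [h1]
  ring

lemma eq_zero_of_derivative_eq_smul {lam : ℂ} (hlam : lam ≠ 0) {q : ℂ[X]}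
    (h : Polynomial.derivative q = lam • q) : q = 0 := by
  by_contra hq
  have h1 := congrArg (fun p : ℂ[X] => p.coeff q.natDegree) h
  simp only [Polynomial.coeff_derivative, Polynomial.coeff_smul, smul_eq_mul] at h1
  rw [Polynomial.coeff_natDegree_succ_eq_zero, zero_mul] at h1
  exact (mul_ne_zero hlam (Polynomial.leadingCoeff_ne_zero.mpr hq)) h1.symm

noncomputable def antideriv (q : ℂ[X]) : ℂ[X] :=
  ∑ k ∈ Finset.range (q.natDegree + 1), Polynomial.C (q.coeff k / (k+1)) * X^(k+1)

lemma derivative_antideriv (q : ℂ[X]) : Polynomial.derivative (antideriv q) = q := by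
  unfold antideriv
  rw [derivative_sum]
  have h : ∀ k ∈ Finset.range (q.natDegree + 1),
      Polynomial.derivative (Polynomial.C (q.coeff k / (k+1)) * X^(k+1))
        = Polynomial.C (q.coeff k) * X^k := by
    intro k _
    rw [derivative_C_mul, derivative_X_pow]
    rw [← mul_assoc, ← Polynomial.C_mul]
    push_cast
    rw [div_mul_cancel₀ _ (Nat.cast_add_one_ne_zero k)]
  rw [Finset.sum_congr rfl h]
  conv_rhs => rw [q.as_sum_range' (q.natDegree + 1) (Nat.lt_succ_self _)]
  exact Finset.sum_congr rfl fun k _ => Polynomial.C_mul_X_pow_eq_monomial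

lemma eval_zero_antideriv (q : ℂ[X]) : Polynomial.eval 0 (antideriv q) = 0 := by
  unfold antideriv
  rw [eval_finset_sum]
  refine Finset.sum_eq_zero fun k _ => ?_
  simp

lemma natDegree_antideriv_le (q : ℂ[X]) : (antideriv q).natDegree ≤ q.natDegree + 1 := by
  refine Polynomial.natDegree_sum_le_of_forall_le _ _ fun k hk => ?_
  refine le_trans (Polynomial.natDegree_C_mul_le _ _) ?_
  rw [Polynomial.natDegree_X_pow]
  exact Nat.add_le_add_right (Nat.lt_succ_iff.mp (Finset.mem_range.mp hk)) 1

lemma key_inj {s : ℕ} {c : Fin s → ℝ} (hc : StrictMono c) (hs : 1 ≤ s)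
    {lam μ : ℂ} (hlam : lam ≠ 0) (hμ : lam * μ = 1)
    (hD : Polynomial.aeval μ (tauP (piPoly s c)) ≠ 0)
    {g : Fin s → ℂ}
    (hg : ∀ i, g i = lam * ∑ j, ((∫ t in (0:ℝ)..(c i), lagrangeFun s c j t : ℝ) : ℂ) * g j) :
    g = 0 := by
  have hμ0 : μ ≠ 0 := fun h => by simp [h] at hμ
  have hinj : Set.InjOn (fun j : Fin s => ((c j : ℝ) : ℂ)) (Finset.univ : Finset (Fin s)) :=
    fun a _ b _ h => hc.injective (Complex.ofReal_injective h)
  set v : Fin s → ℂ := fun j => ((c j : ℝ) : ℂ) with hv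
  set p : ℂ[X] := Lagrange.interpolate Finset.univ v g with hp
  have hpdeg : p.degree < (s : WithBot ℕ) := by
    exact (Lagrange.degree_interpolate_lt g hinj).trans_eq (by simp)
  have hpnat : p.natDegree + 1 ≤ s := by
    rcases eq_or_ne p 0 with h0 | h0
    · rw [h0, natDegree_zero]; omega
    · have := (Polynomial.natDegree_lt_iff_degree_lt h0).mpr (by exact_mod_cast hpdeg)
      omega
  have hpeval : ∀ j, Polynomial.eval (v j) p = g j := fun j =>
    Lagrange.eval_interpolate_at_node g hinj (Finset.mem_univ j)
  set P : ℂ[X] := antideriv p with hPdef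
  have hPdeg : P.natDegree ≤ s := le_trans (natDegree_antideriv_le p) hpnat
  have hPderiv : Polynomial.derivative P = p := derivative_antideriv p
  have hP0 : Polynomial.eval 0 P = 0 := eval_zero_antideriv p
  have hPc : ∀ i, Polynomial.eval (v i) P = μ * g i := by
    intro i
    have h1 := eval_sub_evalC hc hs hPdeg (c i)
    rw [hP0, sub_zero, hPderiv] at h1
    have hpeval' : ∀ j, Polynomial.eval ((c j : ℝ) : ℂ) p = g j := hpeval
    simp_rw [hpeval'] at h1
    have h2 : μ * g i = μ * (lam * ∑ j,
        ((∫ t in (0:ℝ)..(c i), lagrangeFun s c j t : ℝ) : ℂ) * g j) := by rw [← hg i]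
    rw [h1, h2, ← mul_assoc, mul_comm μ lam, hμ, one_mul]
  set r : ℂ[X] := lam • P - p with hr
  have hrdeg : r.natDegree ≤ s := by
    refine le_trans (Polynomial.natDegree_sub_le _ _) ?_
    exact max_le (le_trans (natDegree_smul_le _ _) hPdeg) (by omega)
  have hreval : ∀ i, Polynomial.eval (v i) r = 0 := by
    intro i
    rw [hr, Polynomial.eval_sub, Polynomial.eval_smul, hPc i, hpeval i, smul_eq_mul,
      ← mul_assoc, hμ, one_mul, sub_self]
  set β : ℂ := r.coeff s with hβ
  have hr' : r = Polynomial.C β * piC s c := by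
    rw [← sub_eq_zero]
    refine Polynomial.eq_zero_of_degree_lt_of_eval_index_eq_zero Finset.univ hinj ?_ ?_
    · rw [Finset.card_univ, Fintype.card_fin]
      refine (Polynomial.degree_lt_iff_coeff_zero _ _).mpr fun m hm => ?_
      have hm' : s ≤ m := by exact_mod_cast hm
      rw [Polynomial.coeff_sub, Polynomial.coeff_C_mul]
      rcases eq_or_lt_of_le hm' with h | h
      · have h1 := (monic_piC s c).coeff_natDegree
        rw [natDegree_piC] at h1
        subst h
        rw [h1, mul_one, sub_self]
      · rw [Polynomial.coeff_eq_zero_of_natDegree_lt (lt_of_le_of_lt hrdeg h),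
          Polynomial.coeff_eq_zero_of_natDegree_lt (by rw [natDegree_piC]; exact h),
          mul_zero, sub_self]
    · intro i _
      rw [Polynomial.eval_sub, hreval i, Polynomial.eval_mul, Polynomial.eval_C,
        eval_piC, mul_zero, sub_self]
  have hq : P = β • wPoly s c μ := by
    have hd : Polynomial.derivative (P - β • wPoly s c μ) = lam • (P - β • wPoly s c μ) := by
      rw [Polynomial.derivative_sub, hPderiv, Polynomial.derivative_smul,
        derivative_wPoly s c hμ]
      have hrr : lam • P - p = Polynomial.C β * piC s c := hr ▸ hr'
      simp only [Polynomial.smul_eq_C_mul] at hrr ⊢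
      linear_combination -hrr
    have := eq_zero_of_derivative_eq_smul hlam hd
    linear_combination this
  have hβ0 : β = 0 := by
    have h0 := hP0
    rw [hq, Polynomial.eval_smul, eval_zero_wPoly, smul_eq_mul] at h0
    rcases mul_eq_zero.mp h0 with h | h
    · exact h
    · exact absurd h (mul_ne_zero hμ0 hD)
  have hp0 : p = 0 := by
    rw [← hPderiv, hq, hβ0, zero_smul, Polynomial.derivative_zero]
  funext j
  rw [← hpeval j, hp0, Polynomial.eval_zero]
  rfl

end StabProof

open StabProof

/-- `R(λ) = τ(π(X+1))(1/λ) / τ(π(X))(1/λ)` whenever `λ ≠ 0` and `1/λ` is not a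
root of `τ(π)` (so that `I - λA` is invertible). -/
theorem stabR_eq_tau_ratio (s : ℕ) (hs : 1 ≤ s) (c : Fin s → ℝ) (hc : StrictMono c)
    (lam : ℂ) (hlam : lam ≠ 0)
    (hroot : Polynomial.aeval (1 / lam) (tauP (piPoly s c)) ≠ 0) :
    IsUnit (1 - lam • collocAC s c).det ∧
    stabR s c lam =
      Polynomial.aeval (1 / lam) (tauP ((piPoly s c).comp (Polynomial.X + 1))) /
      Polynomial.aeval (1 / lam) (tauP (piPoly s c)) := by
  set μ : ℂ := 1 / lam with hμdef
  have hμ : lam * μ = 1 := mul_one_div_cancel hlam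
  have hμ0 : μ ≠ 0 := fun h => by simp [h] at hμ
  set D : ℂ := Polynomial.aeval μ (tauP (piPoly s c)) with hD
  set N : ℂ := Polynomial.aeval μ (tauP ((piPoly s c).comp (Polynomial.X + 1))) with hN
  set w : ℂ[X] := wPoly s c μ with hw
  have hw0 : Polynomial.eval 0 w = μ * D := eval_zero_wPoly s c μ
  have hw0ne : Polynomial.eval 0 w ≠ 0 := by rw [hw0]; exact mul_ne_zero hμ0 hroot
  set u : ℂ[X] := (Polynomial.eval 0 w)⁻¹ • w with hu
  have hu0 : Polynomial.eval 0 u = 1 := by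
    rw [hu, Polynomial.eval_smul, smul_eq_mul, inv_mul_cancel₀ hw0ne]
  have hunat : u.natDegree ≤ s := le_trans (natDegree_smul_le _ _) (natDegree_wPoly s c μ)
  have hud : ∀ j : Fin s, Polynomial.eval ((c j : ℝ) : ℂ) (Polynomial.derivative u)
      = lam * Polynomial.eval ((c j : ℝ) : ℂ) u := by
    intro j
    rw [hu, Polynomial.derivative_smul, derivative_wPoly s c hμ]
    rw [Polynomial.eval_smul, Polynomial.eval_sub, Polynomial.eval_smul, eval_piC, sub_zero,
      Polynomial.eval_smul]
    simp only [smul_eq_mul]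
    ring
  set g : Fin s → ℂ := fun i => Polynomial.eval ((c i : ℝ) : ℂ) u with hg
  -- the key evaluation identity specialized
  have hkey : ∀ x : ℝ, Polynomial.eval (x : ℂ) u - 1
      = lam * ∑ j, ((∫ t in (0:ℝ)..x, lagrangeFun s c j t : ℝ) : ℂ) * g j := by
    intro x
    have h1 := eval_sub_evalC hc hs hunat x
    rw [hu0] at h1
    rw [h1, Finset.mul_sum]
    exact Finset.sum_congr rfl fun j _ => by rw [hud j]; ring
  -- I - lam A applied to g equals 1
  have hMg : (1 - lam • collocAC s c) *ᵥ g = (fun _ => 1) := by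
    funext i
    rw [Matrix.sub_mulVec, Matrix.one_mulVec, Matrix.smul_mulVec]
    have h2 : (collocAC s c *ᵥ g) i
        = ∑ j, ((∫ t in (0:ℝ)..(c i), lagrangeFun s c j t : ℝ) : ℂ) * g j := by
      simp [Matrix.mulVec, dotProduct, collocAC, collocA]
    have h3 := hkey (c i)
    simp only [Pi.sub_apply, Pi.smul_apply, smul_eq_mul, h2]
    rw [← h3]
    have : g i = Polynomial.eval ((c i : ℝ) : ℂ) u := rfl
    rw [this]
    ring
  -- invertibility
  have hdet : IsUnit (1 - lam • collocAC s c).det := by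
    rw [isUnit_iff_ne_zero]
    intro h0
    obtain ⟨v, hv0, hv⟩ := Matrix.exists_mulVec_eq_zero_iff.mpr h0
    refine hv0 (key_inj hc hs hlam hμ hroot fun i => ?_)
    have h4 := congrFun hv i
    rw [Matrix.sub_mulVec, Matrix.one_mulVec, Matrix.smul_mulVec] at h4
    have h5 : (collocAC s c *ᵥ v) i
        = ∑ j, ((∫ t in (0:ℝ)..(c i), lagrangeFun s c j t : ℝ) : ℂ) * v j := by
      simp [Matrix.mulVec, dotProduct, collocAC, collocA]
    simp only [Pi.sub_apply, Pi.smul_apply, Pi.zero_apply, smul_eq_mul, h5] at h4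
    linear_combination h4
  refine ⟨hdet, ?_⟩
  have hginv : (1 - lam • collocAC s c)⁻¹ *ᵥ (fun _ => 1) = g := by
    conv_lhs => rw [← hMg]
    rw [Matrix.mulVec_mulVec, Matrix.nonsing_inv_mul _ hdet, Matrix.one_mulVec]
  rw [stabR, hginv]
  have h6 : collocBC s c ⬝ᵥ g
      = ∑ j, ((∫ t in (0:ℝ)..(1:ℝ), lagrangeFun s c j t : ℝ) : ℂ) * g j := by
    simp [dotProduct, collocBC, collocB]
  have h7 := hkey 1
  rw [Complex.ofReal_one] at h7
  rw [h6]
  have h8 : (1 : ℂ) + lam * ∑ j, ((∫ t in (0:ℝ)..(1:ℝ), lagrangeFun s c j t : ℝ) : ℂ) * g j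
      = Polynomial.eval 1 u := by linear_combination -h7
  rw [h8, hu, Polynomial.eval_smul, smul_eq_mul]
  have h9 : Polynomial.eval 1 w = μ * N := eval_one_wPoly s c μ
  rw [h9, hw0]
  field_simp
end
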